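/- Let S and A be nonempty finite sets, let p be a transition kernel, let λ ∈ (0,1), and for each (s,a) ∈ S×A let c_{s,a} : ℝ^n → ℝ be a concave function. For a decision rule d : S → A let h_d(x) ∈ ℝ^S have entries h_d(x)(s) = c_{s,d(s)}(x), and let v_d(x) = (I − λP_d)^{-1} h_d(x). Then for every state s ∈ S, the function x ↦ min_{d : S → A} (v_d(x))(s) is concave on ℝ^n. -/

import Mathlib

open Matrix Finset

section aux
variable {S : Type*} [Fintype S] [Nonempty S] [DecidableEq S]

/-- det of I - λP is nonzero for substochastic λP. -/
lemma det_one_sub_smul_ne_zero (P : Matrix S S ℝ) (hP0 : ∀ i j, 0 ≤ P i j)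
    (hP1 : ∀ i, ∑ j, P i j = 1) {lam : ℝ} (hlam0 : 0 ≤ lam) (hlam1 : lam < 1) :
    ((1 : Matrix S S ℝ) - lam • P).det ≠ 0 := by
  intro hdet
  obtain ⟨v, hv, hveq⟩ := (Matrix.exists_mulVec_eq_zero_iff).2 hdet
  obtain ⟨i₀, -, hi₀⟩ := Finset.exists_max_image Finset.univ (fun i => |v i|) ⟨Classical.arbitrary S, Finset.mem_univ _⟩
  have hvi₀ : 0 < |v i₀| := by
    rcases Function.ne_iff.1 hv with ⟨j, hj⟩
    exact lt_of_lt_of_le (abs_pos.2 hj) (hi₀ j (Finset.mem_univ j))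
  have key : v i₀ = lam * ∑ j, P i₀ j * v j := by
    have h := congrFun hveq i₀
    have h2 : ((1 : Matrix S S ℝ) - lam • P).mulVec v i₀
        = v i₀ - lam * ∑ j, P i₀ j * v j := by
      simp only [Matrix.mulVec, dotProduct, Matrix.sub_apply,
        Matrix.smul_apply, smul_eq_mul, sub_mul, Finset.sum_sub_distrib,
        Finset.mul_sum, mul_assoc]
      congr 1
      simp [Matrix.one_apply]
    rw [h2] at h
    simp only [Pi.zero_apply] at h
    linarith
  have : |v i₀| ≤ lam * |v i₀| := by
    calc |v i₀| = lam * |∑ j, P i₀ j * v j| := by rw [key, abs_mul, abs_of_nonneg hlam0]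
    _ ≤ lam * ∑ j, P i₀ j * |v i₀| := by
        apply mul_le_mul_of_nonneg_left _ hlam0
        refine (Finset.abs_sum_le_sum_abs _ _).trans (Finset.sum_le_sum fun j _ => ?_)
        rw [abs_mul, abs_of_nonneg (hP0 i₀ j)]
        exact mul_le_mul_of_nonneg_left (hi₀ j (Finset.mem_univ j)) (hP0 i₀ j)
    _ = lam * |v i₀| := by rw [← Finset.sum_mul, hP1 i₀, one_mul]
  nlinarith

end aux

section aux2
variable {S : Type*} [Fintype S] [Nonempty S] [DecidableEq S]

lemma inv_entries_nonneg (P : Matrix S S ℝ) (hP0 : ∀ i j, 0 ≤ P i j)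
    (hP1 : ∀ i, ∑ j, P i j = 1) {lam : ℝ} (hlam0 : 0 ≤ lam) (hlam1 : lam < 1)
    (i j : S) : 0 ≤ ((1 : Matrix S S ℝ) - lam • P)⁻¹ i j := by
  set B := (1 : Matrix S S ℝ) - lam • P with hB
  have hdet : IsUnit B.det :=
    isUnit_iff_ne_zero.2 (det_one_sub_smul_ne_zero P hP0 hP1 hlam0 hlam1)
  set w : S → ℝ := B⁻¹.mulVec (Pi.single j 1) with hw
  have hBw : B.mulVec w = Pi.single j 1 := by
    rw [hw, Matrix.mulVec_mulVec, Matrix.mul_nonsing_inv _ hdet, Matrix.one_mulVec]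
  -- w is nonneg
  have hwpos : ∀ k, 0 ≤ w k := by
    obtain ⟨i₀, -, hi₀⟩ := Finset.exists_min_image Finset.univ w
      ⟨Classical.arbitrary S, Finset.mem_univ _⟩
    have key : w i₀ - lam * ∑ k, P i₀ k * w k = (Pi.single j (1:ℝ) : S → ℝ) i₀ := by
      have h := congrFun hBw i₀
      have h2 : B.mulVec w i₀ = w i₀ - lam * ∑ k, P i₀ k * w k := by
        simp only [hB, Matrix.mulVec, dotProduct, Matrix.sub_apply,
          Matrix.smul_apply, smul_eq_mul, sub_mul, Finset.sum_sub_distrib,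
          Finset.mul_sum, mul_assoc]
        congr 1
        simp [Matrix.one_apply]
      rw [h2] at h; exact h
    have hsingle : (0:ℝ) ≤ (Pi.single j (1:ℝ) : S → ℝ) i₀ := by
      rcases eq_or_ne i₀ j with h | h <;>
        simp [h, Pi.single_apply]
    have hsum : lam * (∑ k, P i₀ k * w i₀) ≤ lam * ∑ k, P i₀ k * w k := by
      apply mul_le_mul_of_nonneg_left _ hlam0
      exact Finset.sum_le_sum fun k _ =>
        mul_le_mul_of_nonneg_left (hi₀ k (Finset.mem_univ k)) (hP0 i₀ k)
    have heq : ∑ k, P i₀ k * w i₀ = w i₀ := by rw [← Finset.sum_mul, hP1, one_mul]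
    have h0 : 0 ≤ (1 - lam) * w i₀ := by nlinarith [key, hsingle, hsum, heq]
    intro k
    have : 0 ≤ w i₀ := nonneg_of_mul_nonneg_right h0 (by linarith)
    exact this.trans (hi₀ k (Finset.mem_univ k))
  have : w i = B⁻¹ i j := by simp [hw, Matrix.mulVec_single]
  rw [← this]; exact hwpos i

lemma concaveOn_finset_sum {ι E : Type*} [AddCommGroup E] [Module ℝ E]
    (t : Finset ι) (f : ι → E → ℝ) (hf : ∀ i ∈ t, ConcaveOn ℝ Set.univ (f i)) :
    ConcaveOn ℝ Set.univ (fun x => ∑ i ∈ t, f i x) := by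
  classical
  induction t using Finset.induction with
  | empty => simpa using concaveOn_const (0:ℝ) convex_univ
  | @insert a t hnotmem ih =>
      simp only [Finset.sum_insert hnotmem]
      exact ConcaveOn.add (hf _ (Finset.mem_insert_self _ _))
        (ih fun i hi => hf i (Finset.mem_insert_of_mem hi))

lemma concaveOn_ciInf {ι E : Type*} [Fintype ι] [Nonempty ι] [AddCommGroup E] [Module ℝ E]
    (f : ι → E → ℝ) (hf : ∀ i, ConcaveOn ℝ Set.univ (f i)) :
    ConcaveOn ℝ Set.univ (fun x => ⨅ i, f i x) := by
  refine ⟨convex_univ, fun x _ y _ a b ha hb hab => ?_⟩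
  refine le_ciInf fun i => ?_
  have h1 : (⨅ j, f j x) ≤ f i x := ciInf_le (Set.finite_range _).bddBelow i
  have h2 : (⨅ j, f j y) ≤ f i y := ciInf_le (Set.finite_range _).bddBelow i
  have h3 := (hf i).2 (Set.mem_univ x) (Set.mem_univ y) ha hb hab
  have := add_le_add (smul_le_smul_of_nonneg_left h1 ha) (smul_le_smul_of_nonneg_left h2 hb)
  linarith [this, h3]

end aux2

/-- With concave immediate costs `c_{s,a} : ℝ^n → ℝ`, for each state `s`
the optimal value `x ↦ min over decision rules d of (v_d(x))(s)` is concave in the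
design variable `x`, where `v_d(x) = (I - λ P_d)⁻¹ h_d(x)` and `h_d(x)(s) = c_{s,d(s)}(x)`. -/
theorem stmt_5 {S A : Type*} [Fintype S] [Nonempty S] [DecidableEq S]
    [Fintype A] [Nonempty A]
    (n : ℕ)
    (p : S → A → S → ℝ)
    (hp0 : ∀ s a s', 0 ≤ p s a s')
    (hp1 : ∀ s a, ∑ s', p s a s' = 1)
    (lam : ℝ) (hlam0 : 0 < lam) (hlam1 : lam < 1)
    (c : S → A → (Fin n → ℝ) → ℝ)
    (hc : ∀ s a, ConcaveOn ℝ Set.univ (c s a))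
    (s : S) :
    ConcaveOn ℝ Set.univ (fun x : Fin n → ℝ =>
      ⨅ d : S → A,
        (((1 : Matrix S S ℝ) - lam • Matrix.of fun s₁ s₂ => p s₁ (d s₁) s₂)⁻¹).mulVec
          (fun s₁ => c s₁ (d s₁) x) s) := by
  apply concaveOn_ciInf
  intro d
  set P : Matrix S S ℝ := Matrix.of fun s₁ s₂ => p s₁ (d s₁) s₂ with hPdef
  have hP0 : ∀ i j, 0 ≤ P i j := fun i j => hp0 _ _ _
  have hP1 : ∀ i, ∑ j, P i j = 1 := fun i => hp1 _ _
  have heq : (fun x : Fin n → ℝ =>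
        (((1 : Matrix S S ℝ) - lam • P)⁻¹).mulVec (fun s₁ => c s₁ (d s₁) x) s)
      = fun x => ∑ s', ((1 : Matrix S S ℝ) - lam • P)⁻¹ s s' * c s' (d s') x := by
    funext x
    simp [Matrix.mulVec, dotProduct]
  rw [heq]
  apply concaveOn_finset_sum
  intro s' _
  have hnn := inv_entries_nonneg P hP0 hP1 hlam0.le hlam1 s s'
  simpa [smul_eq_mul] using (hc s' (d s')).smul hnn
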